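/- Let a_1, …, a_M be finitely many anchor points in ℝ^k (M ≥ 1) and let x ∈ ℝ^k. Then x lies in the convex hull of {a_1, …, a_M} if and only if the only point x̂ ∈ ℝ^k satisfying ‖x̂ − a_i‖ ≤ ‖x − a_i‖ for every i ∈ {1,…,M} is x̂ = x. -/

import Mathlib

open RealInnerProductSpace

private lemma norm_le_norm_of_sq {E : Type*} [NormedAddCommGroup E] {u v : E}
    (h : ‖u‖ ^ 2 ≤ ‖v‖ ^ 2) : ‖u‖ ≤ ‖v‖ := by
  nlinarith [norm_nonneg u, norm_nonneg v]

/-- With at least one anchor, `x` lies in the convex hull of the anchors `a 1, …, a M`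
iff the only point `xhat` satisfying `‖xhat - a i‖ ≤ ‖x - a i‖` for every `i` is `x`
itself. -/
theorem stmt_12 (k M : ℕ) (hM : 1 ≤ M) (a : Fin M → EuclideanSpace ℝ (Fin k))
    (x : EuclideanSpace ℝ (Fin k)) :
    x ∈ convexHull ℝ (Set.range a) ↔
      ∀ xhat : EuclideanSpace ℝ (Fin k), (∀ i, ‖xhat - a i‖ ≤ ‖x - a i‖) → xhat = x := by
  constructor
  · intro hx xhat hle
    -- The set where the inequality holds is a halfspace, hence convex.
    have key : ∀ y : EuclideanSpace ℝ (Fin k),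
        ‖xhat - y‖ ≤ ‖x - y‖ ↔ (‖xhat‖ ^ 2 - ‖x‖ ^ 2) / 2 ≤ ⟪xhat - x, y⟫ := by
      intro y
      have h1 : ‖xhat - y‖ ^ 2 = ‖xhat‖ ^ 2 - 2 * ⟪xhat, y⟫ + ‖y‖ ^ 2 :=
        norm_sub_sq_real xhat y
      have h2 : ‖x - y‖ ^ 2 = ‖x‖ ^ 2 - 2 * ⟪x, y⟫ + ‖y‖ ^ 2 := norm_sub_sq_real x y
      have h3 : ⟪xhat - x, y⟫ = ⟪xhat, y⟫ - ⟪x, y⟫ := inner_sub_left _ _ _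
      constructor
      · intro h
        have hsq : ‖xhat - y‖ ^ 2 ≤ ‖x - y‖ ^ 2 := by
          nlinarith [norm_nonneg (xhat - y), norm_nonneg (x - y)]
        linarith
      · intro h
        apply norm_le_norm_of_sq
        linarith
    have hlin : IsLinearMap ℝ (fun y : EuclideanSpace ℝ (Fin k) => ⟪xhat - x, y⟫) :=
      ⟨fun p q => inner_add_right _ _ _, fun c p => real_inner_smul_right _ _ _⟩
    have hconv : Convex ℝ {y : EuclideanSpace ℝ (Fin k) |
        (‖xhat‖ ^ 2 - ‖x‖ ^ 2) / 2 ≤ ⟪xhat - x, y⟫} := convex_halfSpace_ge hlin _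
    have hsub : Set.range a ⊆ {y : EuclideanSpace ℝ (Fin k) |
        (‖xhat‖ ^ 2 - ‖x‖ ^ 2) / 2 ≤ ⟪xhat - x, y⟫} := by
      rintro _ ⟨i, rfl⟩
      exact (key (a i)).1 (hle i)
    have hx' : (‖xhat‖ ^ 2 - ‖x‖ ^ 2) / 2 ≤ ⟪xhat - x, x⟫ :=
      convexHull_min hsub hconv hx
    have : ‖xhat - x‖ ≤ ‖x - x‖ := (key x).2 hx'
    simpa [sub_eq_zero] using le_antisymm this (by simp)
  · intro h
    by_contra hx
    set K := convexHull ℝ (Set.range a) with hK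
    have hKconv : Convex ℝ K := convex_convexHull ℝ _
    have hKne : K.Nonempty :=
      ⟨a ⟨0, hM⟩, subset_convexHull ℝ _ (Set.mem_range_self _)⟩
    have hKcl : IsClosed K := ((Set.finite_range a).isCompact_convexHull ℝ).isClosed
    obtain ⟨p, hpK, hp⟩ :=
      exists_norm_eq_iInf_of_complete_convex hKne hKcl.isComplete hKconv x
    have hvar : ∀ w ∈ K, ⟪x - p, w - p⟫ ≤ 0 :=
      (norm_eq_iInf_iff_real_inner_le_zero hKconv hpK).1 hp
    have hple : ∀ i, ‖p - a i‖ ≤ ‖x - a i‖ := by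
      intro i
      have hai : a i ∈ K := subset_convexHull ℝ _ (Set.mem_range_self i)
      have hv := hvar (a i) hai
      apply norm_le_norm_of_sq
      have hexp : ‖x - a i‖ ^ 2 = ‖(x - p) + (p - a i)‖ ^ 2 := by
        norm_num
      have : ‖(x - p) + (p - a i)‖ ^ 2
          = ‖x - p‖ ^ 2 + 2 * ⟪x - p, p - a i⟫ + ‖p - a i‖ ^ 2 := by
        rw [@norm_add_sq_real]
      have hneg : ⟪x - p, p - a i⟫ = - ⟪x - p, a i - p⟫ := by
        rw [← inner_neg_right]; congr 1; abel
      nlinarith [sq_nonneg ‖x - p‖]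
    have hpx : p = x := h p hple
    exact hx (hpx ▸ hpK)
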